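/- Let n = m + r with m ≥ 3, τ ∈ {1,−1}, κ ∈ ℝ, let A', D' be r×r real symmetric matrices, and set A = blockDiag(τE_m, A') and D = blockDiag(τE_mJ(κ,m), D'). Let b, e ∈ ℝⁿ and c ∈ ℝ, and suppose the Slater condition holds. Then problem (P) is unbounded from below. -/

import Mathlib

open Matrix

/-- The `m × m` anti-diagonal matrix `E_m`: `(E_m)_{i,j} = 1` iff `i + j = m + 1`
(with 1-based indexing). -/
noncomputable def Emat (m : ℕ) : Matrix (Fin m) (Fin m) ℝ :=
  fun i j => if (i : ℕ) + (j : ℕ) + 1 = m then 1 else 0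

/-- The `m × m` real Jordan block `J(λ, m)` with `λ` on the diagonal and `1` on the
superdiagonal. -/
noncomputable def jordanBlock (m : ℕ) (lam : ℝ) : Matrix (Fin m) (Fin m) ℝ :=
  fun i j => if i = j then lam else if (i : ℕ) + 1 = (j : ℕ) then 1 else 0

lemma coeff_exists (τ κ c₃ : ℝ) (hτ : τ = 1 ∨ τ = -1) (hc : c₃ = 0 ∨ c₃ = 1) :
    ∃ a bb : ℝ, 2*bb + c₃*a^2 = -2*τ ∧ κ * (τ*(2*bb + c₃*a^2)) + 2*τ*a*bb < 0 := by
  have h1 : |κ| ≥ κ := le_abs_self κ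
  have h2 : -κ ≤ |κ| := neg_le_abs κ
  have h3 : |κ| ≥ 0 := abs_nonneg κ
  rcases hc with h | h
  · rcases hτ with hτ' | hτ' <;> subst hτ'
    · exact ⟨|κ| + 1, -1, by rw [h]; ring, by rw [h]; nlinarith⟩
    · exact ⟨|κ| + 1, 1, by rw [h]; ring, by rw [h]; nlinarith⟩
  · rcases hτ with hτ' | hτ' <;> subst hτ'
    · refine ⟨|κ| + 2, (-2 - (|κ|+2)^2)/2, by rw [h]; ring, ?_⟩
      rw [h]
      nlinarith [pow_pos (show (0:ℝ) < |κ| + 2 by linarith) 3]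
    · refine ⟨-(|κ| + 2), (2 - (|κ|+2)^2)/2, by rw [h]; ring, ?_⟩
      rw [h]
      nlinarith [pow_pos (show (0:ℝ) < |κ| + 2 by linarith) 3]

lemma parabola_lemma (q C L M : ℝ) (hq : q < 0) :
    ∃ T : ℝ, ∀ t, T ≤ t → C + t*L + q*t^2 < M := by
  refine ⟨max 1 ((|C| + |L| + |M| + 1)/(-q)), fun t ht => ?_⟩
  have h1 : (1:ℝ) ≤ t := le_trans (le_max_left _ _) ht
  have ht0 : (0:ℝ) ≤ t := by linarith
  have h2 : (|C| + |L| + |M| + 1)/(-q) ≤ t := le_trans (le_max_right _ _) ht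
  have h3 : |C| + |L| + |M| + 1 ≤ t * (-q) := by
    rw [div_le_iff₀ (by linarith)] at h2; linarith
  have h4 : t * (|C| + |L| + |M| + 1) ≤ t * (t * (-q)) :=
    mul_le_mul_of_nonneg_left h3 ht0
  have h5 : t * L ≤ t * |L| := mul_le_mul_of_nonneg_left (le_abs_self L) ht0
  nlinarith [le_abs_self C, neg_abs_le M, abs_nonneg C, abs_nonneg M, abs_nonneg L]

lemma quad_reindex {m r : ℕ} (M : Matrix (Fin m ⊕ Fin r) (Fin m ⊕ Fin r) ℝ)
    (u v : Fin (m+r) → ℝ) :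
    u ⬝ᵥ ((Matrix.reindex finSumFinEquiv finSumFinEquiv M) *ᵥ v) =
      (u ∘ finSumFinEquiv) ⬝ᵥ (M *ᵥ (v ∘ finSumFinEquiv)) := by
  rw [reindex_apply, submatrix_mulVec_equiv, dotProduct_comp_equiv_symm]
  simp

lemma EJ_apply (m : ℕ) (lam : ℝ) (i j : Fin m) :
    (Emat m * jordanBlock m lam) i j =
      (if (i:ℕ) + (j:ℕ) + 1 = m then lam else 0) +
      (if (i:ℕ) + (j:ℕ) = m then 1 else 0) := by
  have him : (i:ℕ) < m := i.isLt
  have hjm : (j:ℕ) < m := j.isLt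
  rw [Matrix.mul_apply]
  set k0 : Fin m := ⟨m - 1 - (i:ℕ), by omega⟩ with hk0
  have hE : ∀ k : Fin m, Emat m i k * jordanBlock m lam k j =
      if k = k0 then jordanBlock m lam k j else 0 := by
    intro k
    have hkm : (k:ℕ) < m := k.isLt
    by_cases hk : k = k0
    · subst hk
      have : (i:ℕ) + (m - 1 - (i:ℕ)) + 1 = m := by omega
      simp [Emat, hk0, this]
    · have hkv : (k:ℕ) ≠ m - 1 - (i:ℕ) := fun hh => hk (Fin.ext hh)
      have : ¬ ((i:ℕ) + (k:ℕ) + 1 = m) := by omega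
      simp [Emat, this, hk]
  rw [Finset.sum_congr rfl (fun k _ => hE k)]
  rw [Finset.sum_ite_eq' Finset.univ k0, if_pos (Finset.mem_univ _)]
  have hk0v : (k0:ℕ) = m - 1 - (i:ℕ) := rfl
  simp only [jordanBlock, Fin.ext_iff, hk0v]
  split_ifs <;> first | omega | norm_num

/-- Theorem 2.2 of Jiang–Li–Wu: if a type A block pair `(τ E_m, τ E_m J(κ, m))` of size
`m ≥ 3` with real eigenvalue occurs in the canonical form, then the GTRS `(P)` is unbounded
from below (assuming the Slater condition). -/
theorem stmt_3 (m r : ℕ) (hm : 3 ≤ m) (τ κ : ℝ) (hτ : τ = 1 ∨ τ = -1)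
    (A' D' : Matrix (Fin r) (Fin r) ℝ) (hA' : A'.IsSymm) (hD' : D'.IsSymm)
    (A D : Matrix (Fin (m + r)) (Fin (m + r)) ℝ)
    (hA : A = Matrix.reindex finSumFinEquiv finSumFinEquiv
      (Matrix.fromBlocks (τ • Emat m) 0 0 A'))
    (hD : D = Matrix.reindex finSumFinEquiv finSumFinEquiv
      (Matrix.fromBlocks (τ • (Emat m * jordanBlock m κ)) 0 0 D'))
    (b e : Fin (m + r) → ℝ) (c : ℝ)
    (hslater : ∃ x : Fin (m + r) → ℝ, (1/2) * (x ⬝ᵥ A.mulVec x) + b ⬝ᵥ x + c < 0) :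
    ∀ M : ℝ, ∃ x : Fin (m + r) → ℝ,
      (1/2) * (x ⬝ᵥ A.mulVec x) + b ⬝ᵥ x + c ≤ 0 ∧
      (1/2) * (x ⬝ᵥ D.mulVec x) + e ⬝ᵥ x < M := by
  obtain ⟨xb, hxb⟩ := hslater
  intro M
  set c₃ : ℝ := if m = 3 then 1 else 0 with hc3
  obtain ⟨a, bb, hab1, hab2⟩ := coeff_exists τ κ c₃ hτ
    (by rw [hc3]; split <;> simp)
  set j0 : Fin m := ⟨0, by omega⟩ with hj0
  set j1 : Fin m := ⟨1, by omega⟩ with hj1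
  set jl : Fin m := ⟨m - 1, by omega⟩ with hjl
  have v0 : (j0 : ℕ) = 0 := rfl
  have v1 : (j1 : ℕ) = 1 := rfl
  have vl : (jl : ℕ) = m - 1 := rfl
  set y : Fin m → ℝ := Pi.single j0 1 + Pi.single j1 a + Pi.single jl bb with hy
  set d : Fin (m + r) → ℝ := fun i => Sum.elim y (0 : Fin r → ℝ) (finSumFinEquiv.symm i) with hd
  have hde : d ∘ finSumFinEquiv = Sum.elim y 0 := by
    funext p; simp [hd]
  have block_quad : ∀ (P : Matrix (Fin m) (Fin m) ℝ) (Q : Matrix (Fin r) (Fin r) ℝ),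
      d ⬝ᵥ ((Matrix.reindex finSumFinEquiv finSumFinEquiv
        (Matrix.fromBlocks (τ • P) 0 0 Q)) *ᵥ d) = τ * (y ⬝ᵥ (P *ᵥ y)) := by
    intro P Q
    rw [quad_reindex, hde, Matrix.fromBlocks_mulVec]
    simp [sumElim_dotProduct_sumElim, Matrix.smul_mulVec]
  have expandy : ∀ P : Matrix (Fin m) (Fin m) ℝ, y ⬝ᵥ (P *ᵥ y) =
      1 * (P j0 j0 * 1 + P j0 j1 * a + P j0 jl * bb)
      + a * (P j1 j0 * 1 + P j1 j1 * a + P j1 jl * bb)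
      + bb * (P jl j0 * 1 + P jl j1 * a + P jl jl * bb) := by
    intro P
    simp only [hy, Matrix.mulVec_add, Matrix.mulVec_single, add_dotProduct,
      single_dotProduct, Pi.add_apply, Pi.smul_apply, op_smul_eq_mul, Matrix.col_apply]
  -- entries of Emat
  have e00 : Emat m j0 j0 = 0 := by simp only [Emat, v0]; rw [if_neg (by omega)]
  have e01 : Emat m j0 j1 = 0 := by simp only [Emat, v0, v1]; rw [if_neg (by omega)]
  have e0l : Emat m j0 jl = 1 := by simp only [Emat, v0, vl]; rw [if_pos (by omega)]
  have e10 : Emat m j1 j0 = 0 := by simp only [Emat, v0, v1]; rw [if_neg (by omega)]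
  have e11 : Emat m j1 j1 = c₃ := by
    simp only [Emat, v1]; rw [hc3]; exact if_congr (by omega) rfl rfl
  have e1l : Emat m j1 jl = 0 := by simp only [Emat, v1, vl]; rw [if_neg (by omega)]
  have el0 : Emat m jl j0 = 1 := by simp only [Emat, v0, vl]; rw [if_pos (by omega)]
  have el1 : Emat m jl j1 = 0 := by simp only [Emat, v1, vl]; rw [if_neg (by omega)]
  have ell : Emat m jl jl = 0 := by simp only [Emat, vl]; rw [if_neg (by omega)]
  -- entries of Emat * jordanBlock
  have g00 : (Emat m * jordanBlock m κ) j0 j0 = 0 := by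
    rw [EJ_apply]; simp only [v0]; rw [if_neg (by omega), if_neg (by omega)]; ring
  have g01 : (Emat m * jordanBlock m κ) j0 j1 = 0 := by
    rw [EJ_apply]; simp only [v0, v1]; rw [if_neg (by omega), if_neg (by omega)]; ring
  have g0l : (Emat m * jordanBlock m κ) j0 jl = κ := by
    rw [EJ_apply]; simp only [v0, vl]; rw [if_pos (by omega), if_neg (by omega)]; ring
  have g10 : (Emat m * jordanBlock m κ) j1 j0 = 0 := by
    rw [EJ_apply]; simp only [v0, v1]; rw [if_neg (by omega), if_neg (by omega)]; ring
  have g11 : (Emat m * jordanBlock m κ) j1 j1 = κ * c₃ := by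
    rw [EJ_apply]; simp only [v1]; rw [hc3]
    split_ifs <;> first | omega | ring
  have g1l : (Emat m * jordanBlock m κ) j1 jl = 1 := by
    rw [EJ_apply]; simp only [v1, vl]; rw [if_neg (by omega), if_pos (by omega)]; ring
  have gl0 : (Emat m * jordanBlock m κ) jl j0 = κ := by
    rw [EJ_apply]; simp only [v0, vl]; rw [if_pos (by omega), if_neg (by omega)]; ring
  have gl1 : (Emat m * jordanBlock m κ) jl j1 = 1 := by
    rw [EJ_apply]; simp only [v1, vl]; rw [if_neg (by omega), if_pos (by omega)]; ring
  have gll : (Emat m * jordanBlock m κ) jl jl = 0 := by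
    rw [EJ_apply]; simp only [vl]; rw [if_neg (by omega), if_neg (by omega)]; ring
  have hqE : y ⬝ᵥ (Emat m *ᵥ y) = 2*bb + c₃*a^2 := by
    rw [expandy, e00, e01, e0l, e10, e11, e1l, el0, el1, ell]; ring
  have hqG : y ⬝ᵥ ((Emat m * jordanBlock m κ) *ᵥ y)
      = κ*(2*bb + c₃*a^2) + 2*a*bb := by
    rw [expandy, g00, g01, g0l, g10, g11, g1l, gl0, gl1, gll]; ring
  have hdA : d ⬝ᵥ (A *ᵥ d) = -2 := by
    rw [hA, block_quad, hqE, hab1]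
    rcases hτ with h | h <;> rw [h] <;> ring
  have hdD : d ⬝ᵥ (D *ᵥ d) < 0 := by
    rw [hD, block_quad, hqG]
    have : τ * (κ*(2*bb + c₃*a^2) + 2*a*bb)
        = κ * (τ*(2*bb + c₃*a^2)) + 2*τ*a*bb := by ring
    rw [this]; exact hab2
  have expandA : ∀ t : ℝ,
      (1/2) * ((xb + t • d) ⬝ᵥ A.mulVec (xb + t • d)) + b ⬝ᵥ (xb + t • d) + c
      = ((1/2) * (xb ⬝ᵥ A.mulVec xb) + b ⬝ᵥ xb + c)
        + t * ((1/2) * (xb ⬝ᵥ A.mulVec d + d ⬝ᵥ A.mulVec xb) + b ⬝ᵥ d)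
        + (-1) * t^2 := by
    intro t
    simp only [Matrix.mulVec_add, Matrix.mulVec_smul, dotProduct_add, add_dotProduct,
      dotProduct_smul, smul_dotProduct, smul_eq_mul]
    rw [show d ⬝ᵥ A.mulVec d = -2 from hdA]
    ring
  have expandD : ∀ t : ℝ,
      (1/2) * ((xb + t • d) ⬝ᵥ D.mulVec (xb + t • d)) + e ⬝ᵥ (xb + t • d)
      = ((1/2) * (xb ⬝ᵥ D.mulVec xb) + e ⬝ᵥ xb)
        + t * ((1/2) * (xb ⬝ᵥ D.mulVec d + d ⬝ᵥ D.mulVec xb) + e ⬝ᵥ d)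
        + ((d ⬝ᵥ D.mulVec d)/2) * t^2 := by
    intro t
    simp only [Matrix.mulVec_add, Matrix.mulVec_smul, dotProduct_add, add_dotProduct,
      dotProduct_smul, smul_dotProduct, smul_eq_mul]
    ring
  obtain ⟨T1, hT1⟩ := parabola_lemma (-1)
    ((1/2) * (xb ⬝ᵥ A.mulVec xb) + b ⬝ᵥ xb + c)
    ((1/2) * (xb ⬝ᵥ A.mulVec d + d ⬝ᵥ A.mulVec xb) + b ⬝ᵥ d) 0 (by norm_num)
  obtain ⟨T2, hT2⟩ := parabola_lemma ((d ⬝ᵥ D.mulVec d)/2)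
    ((1/2) * (xb ⬝ᵥ D.mulVec xb) + e ⬝ᵥ xb)
    ((1/2) * (xb ⬝ᵥ D.mulVec d + d ⬝ᵥ D.mulVec xb) + e ⬝ᵥ d) M (by linarith)
  refine ⟨xb + (max T1 T2) • d, ?_, ?_⟩
  · rw [expandA]
    exact le_of_lt (hT1 _ (le_max_left _ _))
  · rw [expandD]
    exact hT2 _ (le_max_right _ _)
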